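/- With notation as in the correspondence of local quadratic transform sequences along R_P: let S = ⋃ R_n, let S̄ = ⋃ R̄_n (the union of the corresponding quadratic transforms of R/P), and let S̃ = α⁻¹(S̄) be the pullback of S̄ along the residue map α : R_P → κ(P). Then S̃ = S + PR_P, and S̃ is non-archimedean. -/

import Mathlib

section GenLQT

variable (F : Type) [Field F]

/-- The nonunits of a local subring `A` of a field `F`. -/
def genMaxSet (A : Subring F) : Set F :=
  {a | a ∈ A ∧ ¬ ∃ b ∈ A, a * b = 1}

/-- The ring `A[m_A/x]`. -/
def genBlowup (A : Subring F) (x : F) : Subring F :=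
  Subring.closure ((A : Set F) ∪ {y | ∃ a ∈ genMaxSet F A, y * x = a})

/-- `A'` is a local quadratic transform of the local subring `A` of `F`. -/
def IsGenLQT (A A' : Subring F) : Prop :=
  ∃ x ∈ genMaxSet F A, x ≠ 0 ∧
    ∃ Q : Ideal (genBlowup F A x), Q.IsPrime ∧
      (∀ a ∈ genMaxSet F A, ∃ q : genBlowup F A x, q ∈ Q ∧ (q : F) = a) ∧
      (A' : Set F) = {y | ∃ b s : genBlowup F A x, s ∉ Q ∧ y * (s : F) = (b : F)}

/-- The pullback `α⁻¹(T)` of a subset `T` of `κ(P)` along the residue map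
`α : R_P → κ(P)`, viewed as a subset of `F`. -/
def pullbackSet (RP : Subring F) (K : Type) [Field K] (α : RP →+* K) (T : Set K) :
    Set F :=
  {y | ∃ h : y ∈ RP, α ⟨y, h⟩ ∈ T}

end GenLQT

namespace LQTAux

variable {F : Type} [Field F]

lemma blowup_le (A : Subring F) (x : F) : A ≤ genBlowup F A x :=
  fun _ ha => Subring.subset_closure (Or.inl ha)

lemma lqt_le {A A' : Subring F} (h : IsGenLQT F A A') : A ≤ A' := by
  obtain ⟨x, _, _, Q, hQ, _, hA'⟩ := h
  intro a ha
  have h1 : (1 : genBlowup F A x) ∉ Q := fun h1 => hQ.ne_top ((Ideal.eq_top_iff_one Q).2 h1)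
  have : a ∈ (A' : Set F) := by
    rw [hA']
    exact ⟨⟨a, blowup_le A x ha⟩, 1, h1, by simp⟩
  exact this

/-- If `y` has a representation with numerator in `Q`, it is a nonunit of `A'`. -/
lemma nonunit_of_rep {A : Subring F} {x : F} {Q : Ideal (genBlowup F A x)}
    (hQ : Q.IsPrime) {A' : Subring F}
    (hA' : (A' : Set F) = {y | ∃ b s : genBlowup F A x, s ∉ Q ∧ y * (s : F) = (b : F)})
    {y : F} {q s : genBlowup F A x} (hq : q ∈ Q) (hs : s ∉ Q)
    (hys : y * (s : F) = (q : F)) : y ∈ genMaxSet F A' := by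
  constructor
  · have : y ∈ (A' : Set F) := by rw [hA']; exact ⟨q, s, hs, hys⟩
    exact this
  · rintro ⟨c, hc, hyc⟩
    have hc' : c ∈ (A' : Set F) := hc
    rw [hA'] at hc'
    obtain ⟨b', s', hs', hcs'⟩ := hc'
    have hval : ((q * b' : genBlowup F A x) : F) = ((s * s' : genBlowup F A x) : F) := by
      push_cast
      calc (q : F) * (b' : F) = (y * (s : F)) * (c * (s' : F)) := by rw [hys, hcs']
        _ = (y * c) * ((s : F) * (s' : F)) := by ring
        _ = (s : F) * (s' : F) := by rw [hyc]; ring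
    have heq : (q * b' : genBlowup F A x) = s * s' := Subtype.ext hval
    have hss' : s * s' ∈ Q := heq ▸ Q.mul_mem_right b' hq
    rcases hQ.mem_or_mem hss' with h | h
    · exact hs h
    · exact hs' h

/-- If `y` has a representation with numerator not in `Q`, it is a unit of `A'`. -/
lemma unit_of_rep {A : Subring F} {x : F} {Q : Ideal (genBlowup F A x)}
    {A' : Subring F}
    (hA' : (A' : Set F) = {y | ∃ b s : genBlowup F A x, s ∉ Q ∧ y * (s : F) = (b : F)})
    {y : F} {b s : genBlowup F A x} (hb : b ∉ Q) (hs : s ∉ Q)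
    (hys : y * (s : F) = (b : F)) : ∃ c ∈ A', y * c = 1 := by
  have hb0 : (b : F) ≠ 0 := fun h => hb (by rw [show b = 0 from Subtype.ext h]; exact Q.zero_mem)
  refine ⟨(s : F) / (b : F), ?_, ?_⟩
  · have : (s : F) / (b : F) ∈ (A' : Set F) := by
      rw [hA']
      exact ⟨s, b, hb, by field_simp⟩
    exact this
  · rw [← mul_div_assoc, hys, div_self hb0]

lemma rep_of_nonunit {A : Subring F} {x : F} {Q : Ideal (genBlowup F A x)}
    {A' : Subring F}
    (hA' : (A' : Set F) = {y | ∃ b s : genBlowup F A x, s ∉ Q ∧ y * (s : F) = (b : F)})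
    {y : F} (h : y ∈ genMaxSet F A') :
    ∃ q s : genBlowup F A x, q ∈ Q ∧ s ∉ Q ∧ y * (s : F) = (q : F) := by
  obtain ⟨hy, hnu⟩ := h
  have hy' : y ∈ (A' : Set F) := hy
  rw [hA'] at hy'
  obtain ⟨b, s, hs, hys⟩ := hy'
  by_cases hb : b ∈ Q
  · exact ⟨b, s, hb, hs, hys⟩
  · obtain ⟨c, hc, hyc⟩ := unit_of_rep hA' hb hs hys
    exact absurd ⟨c, hc, hyc⟩ hnu

/-- Nonunits of `A` remain nonunits in a local quadratic transform `A'`. -/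
lemma lqt_nu_mono {A A' : Subring F} (h : IsGenLQT F A A') {y : F}
    (hy : y ∈ genMaxSet F A) : y ∈ genMaxSet F A' := by
  obtain ⟨x, _, _, Q, hQ, hQm, hA'⟩ := h
  obtain ⟨q, hqQ, hq⟩ := hQm y hy
  have h1 : (1 : genBlowup F A x) ∉ Q := fun h1 => hQ.ne_top ((Ideal.eq_top_iff_one Q).2 h1)
  exact nonunit_of_rep hQ hA' hqQ h1 (by simpa using hq.symm)

/-- Sums of nonunits of a local quadratic transform are nonunits. -/
lemma lqt_add {A A' : Subring F} (h : IsGenLQT F A A') {y₁ y₂ : F}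
    (h1 : y₁ ∈ genMaxSet F A') (h2 : y₂ ∈ genMaxSet F A') :
    y₁ + y₂ ∈ genMaxSet F A' := by
  obtain ⟨x, _, _, Q, hQ, _, hA'⟩ := h
  obtain ⟨q₁, s₁, hq₁, hs₁, e₁⟩ := rep_of_nonunit hA' h1
  obtain ⟨q₂, s₂, hq₂, hs₂, e₂⟩ := rep_of_nonunit hA' h2
  have hs : s₁ * s₂ ∉ Q := fun hmem => (hQ.mem_or_mem hmem).elim hs₁ hs₂
  have hq : q₁ * s₂ + q₂ * s₁ ∈ Q :=
    Q.add_mem (Q.mul_mem_right _ hq₁) (Q.mul_mem_right _ hq₂)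
  refine nonunit_of_rep hQ hA' hq hs ?_
  push_cast
  rw [← e₁, ← e₂]; ring

end LQTAux

/-- With `{Rₙ}` a sequence of local quadratic transforms of a Noetherian local domain `R`
along `R_P`, let `S = ⋃ Rₙ`, let `S̄ = ⋃ R̄ₙ` be the union of the corresponding quadratic
transforms of `R/P`, and let `S̃ = α⁻¹(S̄)` be the pullback of `S̄` along the residue map
`α : R_P → κ(P)`.  Then `S̃ = S + PR_P`, and `S̃` is non-archimedean. -/
theorem pullback_of_union_eq_sum_and_nonarchimedean
    (F : Type) [Field F] (R : Subring F)
    [IsNoetherianRing R] [IsLocalRing R]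
    (hfrac : ∀ y : F, ∃ a b : R, b ≠ 0 ∧ y * (b : F) = (a : F))
    (P : Ideal R) (hPp : P.IsPrime) (hPne : P ≠ ⊥)
    (hPnm : P ≠ IsLocalRing.maximalIdeal R)
    (RP : Subring F)
    (hRP : (RP : Set F) = {y : F | ∃ a s : R, s ∉ P ∧ y * (s : F) = (a : F)})
    (K : Type) [Field K] (α : RP →+* K) (hαsurj : Function.Surjective α)
    (hker : ∀ y : RP, α y = 0 ↔
      ∃ p s : R, p ∈ P ∧ s ∉ P ∧ (y : F) * (s : F) = (p : F))
    (seq : ℕ → Subring F) (hseq0 : seq 0 = R)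
    (hseq : ∀ n, IsGenLQT F (seq n) (seq (n + 1)) ∧ seq n ≤ RP) :
    pullbackSet F RP K α
        (⋃ n, (Subring.map α (Subring.comap RP.subtype (seq n)) : Set K)) =
      {y : F | ∃ s p : F, (∃ n, s ∈ seq n) ∧
        (∃ q t : R, q ∈ P ∧ t ∉ P ∧ p * (t : F) = (q : F)) ∧ y = s + p} ∧
    ∃ x ∈ pullbackSet F RP K α
        (⋃ n, (Subring.map α (Subring.comap RP.subtype (seq n)) : Set K)),
      (¬ ∃ b ∈ pullbackSet F RP K α
          (⋃ n, (Subring.map α (Subring.comap RP.subtype (seq n)) : Set K)),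
        x * b = 1) ∧
      ∃ y₀ : F, y₀ ≠ 0 ∧ ∀ n : ℕ,
        ∃ d ∈ pullbackSet F RP K α
          (⋃ n, (Subring.map α (Subring.comap RP.subtype (seq n)) : Set K)),
        y₀ = x ^ (n + 1) * d := by
  classical
  -- basic facts
  have hRle : ∀ n, R ≤ seq n := by
    intro n
    induction n with
    | zero => rw [hseq0]
    | succ n ih => exact ih.trans (LQTAux.lqt_le (hseq n).1)
  have hone_nmem : (1 : R) ∉ P := fun h1 => hPp.ne_top ((Ideal.eq_top_iff_one P).2 h1)
  -- monotone nonunit transfer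
  have hnu : ∀ n, ∀ y : F, y ∈ genMaxSet F R → y ∈ genMaxSet F (seq n) := by
    intro n
    induction n with
    | zero => intro y hy; rw [hseq0]; exact hy
    | succ n ih => intro y hy; exact LQTAux.lqt_nu_mono (hseq n).1 (ih y hy)
  -- locality of each seq n
  have hloc : ∀ n, ∀ y₁ y₂ : F, y₁ ∈ genMaxSet F (seq n) → y₂ ∈ genMaxSet F (seq n) →
      y₁ + y₂ ∈ genMaxSet F (seq n) := by
    intro n
    match n with
    | 0 =>
      intro y₁ y₂ h1 h2
      rw [hseq0] at h1 h2 ⊢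
      obtain ⟨hm1, hn1⟩ := h1
      obtain ⟨hm2, hn2⟩ := h2
      refine ⟨R.add_mem hm1 hm2, ?_⟩
      rintro ⟨b, hb, hab⟩
      have hu : IsUnit ((⟨y₁, hm1⟩ : R) + ⟨y₂, hm2⟩) := by
        refine isUnit_iff_exists_inv.2 ⟨⟨b, hb⟩, ?_⟩
        exact Subtype.ext (by push_cast; exact hab)
      rcases IsLocalRing.isUnit_or_isUnit_of_isUnit_add hu with h | h
      · obtain ⟨v, hv⟩ := isUnit_iff_exists_inv.1 h
        refine hn1 ⟨(v : F), v.2, ?_⟩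
        have hv' := Subtype.ext_iff.1 hv
        push_cast at hv'
        exact hv'
      · obtain ⟨v, hv⟩ := isUnit_iff_exists_inv.1 h
        refine hn2 ⟨(v : F), v.2, ?_⟩
        have hv' := Subtype.ext_iff.1 hv
        push_cast at hv'
        exact hv'
    | n + 1 =>
      intro y₁ y₂ h1 h2
      exact LQTAux.lqt_add (hseq n).1 h1 h2
  -- Part 1 : the set equality
  have hEq : pullbackSet F RP K α
        (⋃ n, (Subring.map α (Subring.comap RP.subtype (seq n)) : Set K)) =
      {y : F | ∃ s p : F, (∃ n, s ∈ seq n) ∧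
        (∃ q t : R, q ∈ P ∧ t ∉ P ∧ p * (t : F) = (q : F)) ∧ y = s + p} := by
    ext y
    constructor
    · rintro ⟨hy, hT⟩
      simp only [Set.mem_iUnion, SetLike.mem_coe, Subring.mem_map, Subring.mem_comap,
        Subring.coe_subtype] at hT
      obtain ⟨n, w, hw, hαw⟩ := hT
      have hα0 : α (⟨y, hy⟩ - w) = 0 := by
        rw [map_sub, hαw, sub_self]
      obtain ⟨q, t, hq, ht, hpt⟩ := (hker _).1 hα0
      refine ⟨(w : F), y - (w : F), ⟨n, hw⟩, ⟨q, t, hq, ht, ?_⟩, by ring⟩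
      simpa using hpt
    · rintro ⟨s, p, ⟨n, hsn⟩, ⟨q, t, hq, ht, hpt⟩, rfl⟩
      have hsRP : s ∈ RP := (hseq n).2 hsn
      have hpRP : p ∈ RP := by
        have : p ∈ (RP : Set F) := by rw [hRP]; exact ⟨q, t, ht, hpt⟩
        exact this
      have hyRP : s + p ∈ RP := RP.add_mem hsRP hpRP
      have hαp : α ⟨p, hpRP⟩ = 0 := (hker _).2 ⟨q, t, hq, ht, hpt⟩
      refine ⟨hyRP, ?_⟩
      simp only [Set.mem_iUnion, SetLike.mem_coe, Subring.mem_map, Subring.mem_comap,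
        Subring.coe_subtype]
      refine ⟨n, ⟨s, hsRP⟩, hsn, ?_⟩
      have hsplit : (⟨s + p, hyRP⟩ : RP) = ⟨s, hsRP⟩ + ⟨p, hpRP⟩ := rfl
      rw [hsplit, map_add, hαp, add_zero]
  refine ⟨hEq, ?_⟩
  rw [hEq]
  -- choose x₀ ∈ m_R \ P
  have hPlt : P < IsLocalRing.maximalIdeal R :=
    lt_of_le_of_ne (IsLocalRing.le_maximalIdeal hPp.ne_top) hPnm
  obtain ⟨x₀, hx₀m, hx₀P⟩ := SetLike.exists_of_lt hPlt
  have hx₀0 : (x₀ : F) ≠ 0 := by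
    intro h
    exact hx₀P (by rw [show x₀ = 0 from Subtype.ext h]; exact P.zero_mem)
  set x : F := (x₀ : F) with hxdef
  have hxNU : x ∈ genMaxSet F R := by
    refine ⟨x₀.2, ?_⟩
    rintro ⟨b, hb, hxb⟩
    have : IsUnit x₀ := isUnit_iff_exists_inv.2 ⟨⟨b, hb⟩, Subtype.ext (by push_cast; exact hxb)⟩
    exact (IsLocalRing.mem_maximalIdeal x₀).1 hx₀m this
  -- zero is in "PR_P" part
  have hzeroP : ∃ q t : R, q ∈ P ∧ t ∉ P ∧ (0 : F) * (t : F) = (q : F) :=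
    ⟨0, 1, P.zero_mem, hone_nmem, by simp⟩
  refine ⟨x, ⟨x, 0, ⟨0, hseq0 ▸ x₀.2⟩, hzeroP, by ring⟩, ?_, ?_⟩
  · -- x is a nonunit of S̃
    rintro ⟨b, ⟨z, p, ⟨n, hz⟩, ⟨q, t, hq, ht, hpt⟩, rfl⟩, hxb⟩
    have hzRP : z ∈ RP := (hseq n).2 hz
    have hpRP : p ∈ RP := by
      have : p ∈ (RP : Set F) := by rw [hRP]; exact ⟨q, t, ht, hpt⟩
      exact this
    have hxseq : ∀ m, x ∈ seq m := fun m => hRle m x₀.2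
    have hxRP : x ∈ RP := (hseq n).2 (hxseq n)
    have hαp : α ⟨p, hpRP⟩ = 0 := (hker _).2 ⟨q, t, hq, ht, hpt⟩
    -- α(x) * α(z) = 1
    have hmul : α ⟨x, hxRP⟩ * (α ⟨z, hzRP⟩ + α ⟨p, hpRP⟩) = 1 := by
      have : (⟨x, hxRP⟩ * (⟨z, hzRP⟩ + ⟨p, hpRP⟩) : RP) = 1 := Subtype.ext (by push_cast; exact hxb)
      calc α ⟨x, hxRP⟩ * (α ⟨z, hzRP⟩ + α ⟨p, hpRP⟩)
          = α (⟨x, hxRP⟩ * (⟨z, hzRP⟩ + ⟨p, hpRP⟩)) := by rw [map_mul, map_add]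
        _ = 1 := by rw [this, map_one]
    rw [hαp, add_zero] at hmul
    -- u = x*z - 1 is in the kernel
    have huRP : x * z - 1 ∈ RP := RP.sub_mem (RP.mul_mem hxRP hzRP) RP.one_mem
    have hαu : α ⟨x * z - 1, huRP⟩ = 0 := by
      have : (⟨x * z - 1, huRP⟩ : RP) = ⟨x, hxRP⟩ * ⟨z, hzRP⟩ - 1 := rfl
      rw [this, map_sub, map_mul, map_one, hmul, sub_self]
    -- kernel elements of seq n are nonunits of seq n
    have kerNU : ∀ (w : F) (hw : w ∈ seq n) (hwRP : w ∈ RP), α ⟨w, hwRP⟩ = 0 →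
        w ∈ genMaxSet F (seq n) := by
      intro w hw hwRP hw0
      refine ⟨hw, ?_⟩
      rintro ⟨v, hv, hwv⟩
      have hvRP : v ∈ RP := (hseq n).2 hv
      have : α ⟨w, hwRP⟩ * α ⟨v, hvRP⟩ = 1 := by
        rw [← map_mul, show (⟨w, hwRP⟩ * ⟨v, hvRP⟩ : RP) = 1 from
          Subtype.ext (by push_cast; exact hwv), map_one]
      rw [hw0, zero_mul] at this
      exact zero_ne_one this
    have huses : x * z - 1 ∈ seq n :=
      (seq n).sub_mem ((seq n).mul_mem (hxseq n) hz) (seq n).one_mem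
    have hnegu : -(x * z - 1) ∈ genMaxSet F (seq n) := by
      have hnegRP : -(x * z - 1) ∈ RP := RP.neg_mem huRP
      refine kerNU _ ((seq n).neg_mem huses) hnegRP ?_
      have : (⟨-(x * z - 1), hnegRP⟩ : RP) = -⟨x * z - 1, huRP⟩ := rfl
      rw [this, map_neg, hαu, neg_zero]
    have hxzNU : x * z ∈ genMaxSet F (seq n) := by
      refine ⟨(seq n).mul_mem (hxseq n) hz, ?_⟩
      rintro ⟨c, hc, hxc⟩
      exact (hnu n x hxNU).2 ⟨z * c, (seq n).mul_mem hz hc, by rw [← mul_assoc]; exact hxc⟩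
    have hsum := hloc n (x * z) (-(x * z - 1)) hxzNU hnegu
    have h1 : x * z + -(x * z - 1) = 1 := by ring
    rw [h1] at hsum
    exact hsum.2 ⟨1, (seq n).one_mem, by ring⟩
  · -- non-archimedean witness
    obtain ⟨q₀, hq₀P, hq₀0⟩ := Submodule.exists_mem_ne_zero_of_ne_bot hPne
    have hq₀F : (q₀ : F) ≠ 0 := fun h => hq₀0 (Subtype.ext h)
    refine ⟨(q₀ : F), hq₀F, fun n => ?_⟩
    have hxpow : x ^ (n + 1) ≠ 0 := pow_ne_zero _ hx₀0
    refine ⟨(q₀ : F) / x ^ (n + 1), ⟨0, (q₀ : F) / x ^ (n + 1), ⟨0, (seq 0).zero_mem⟩,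
      ⟨q₀, x₀ ^ (n + 1), hq₀P, ?_, ?_⟩, by ring⟩, ?_⟩
    · intro h
      exact hx₀P (hPp.mem_of_pow_mem _ h)
    · push_cast
      rw [div_mul_cancel₀ _ hxpow]
    · rw [mul_div_cancel₀ _ hxpow]
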